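/- Let q_1,…,q_n be positive integers each dividing the positive integer q, let p_1,…,p_n be integers, and let r_1,…,r_n be nonnegative real numbers. Then Re( ∑_{k=0}^{q−1} ∏_{l=1}^n exp(r_l · e^{2πi k p_l/q_l}) ) ≥ q. -/

import Mathlib

open Real Complex

/-- Lower bound from Lemma 6.1: for nonnegative `r l`, the real part of the
exponential character sum is at least `q`. -/
theorem stmt12 (n q : ℕ) (hq : 0 < q) (ql : Fin n → ℕ) (hql : ∀ l, 0 < ql l)
    (hdvd : ∀ l, ql l ∣ q) (p : Fin n → ℤ) (r : Fin n → ℝ) (hr : ∀ l, 0 ≤ r l) :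
    (q : ℝ) ≤ (∑ k ∈ Finset.range q, ∏ l,
        Complex.exp ((r l : ℂ) *
          Complex.exp (2 * (π : ℂ) * Complex.I * (k : ℂ) * (p l : ℂ) / (ql l : ℂ)))).re := by
  set ω : Fin n → ℂ := fun l => Complex.exp (2 * (π : ℂ) * Complex.I * (p l : ℂ) / (ql l : ℂ))
    with hωdef
  have hωq : ∀ l, ω l ^ q = 1 := by
    intro l
    obtain ⟨d, hd⟩ := hdvd l
    have hql0 : (ql l : ℂ) ≠ 0 := Nat.cast_ne_zero.mpr (hql l).ne'
    rw [hωdef]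
    simp only
    rw [← Complex.exp_nat_mul]
    have heq : (q : ℂ) * (2 * (π : ℂ) * Complex.I * (p l : ℂ) / (ql l : ℂ))
        = ((p l * (d : ℤ) : ℤ) : ℂ) * (2 * (π : ℂ) * Complex.I) := by
      have hqc : (q : ℂ) = (ql l : ℂ) * (d : ℂ) := by exact_mod_cast congrArg (Nat.cast : ℕ → ℂ) hd
      rw [hqc]
      push_cast
      field_simp
    rw [heq, Complex.exp_int_mul_two_pi_mul_I]
  set z : ℕ → ℂ := fun k => ∑ l, (r l : ℂ) * ω l ^ k with hzdef
  have hterm : ∀ (k : ℕ) (l : Fin n),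
      Complex.exp (2 * (π : ℂ) * Complex.I * (k : ℂ) * (p l : ℂ) / (ql l : ℂ)) = ω l ^ k := by
    intro k l
    rw [hωdef]
    simp only
    rw [← Complex.exp_nat_mul]
    congr 1
    ring
  have hprod : ∀ k : ℕ, (∏ l, Complex.exp ((r l : ℂ) *
      Complex.exp (2 * (π : ℂ) * Complex.I * (k : ℂ) * (p l : ℂ) / (ql l : ℂ))))
      = Complex.exp (z k) := by
    intro k
    rw [hzdef]
    simp only
    rw [Complex.exp_sum]
    refine Finset.prod_congr rfl fun l _ => ?_
    rw [hterm k l]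
  have hs : ∀ k : ℕ, Summable (fun m : ℕ => z k ^ m / (m.factorial : ℂ)) := fun k =>
    NormedSpace.expSeries_div_summable (z k)
  have hexp : ∀ k : ℕ, Complex.exp (z k) = ∑' m : ℕ, z k ^ m / (m.factorial : ℂ) := by
    intro k
    rw [Complex.exp_eq_exp_ℂ, NormedSpace.exp_eq_tsum_div]
  set g : ℕ → ℂ := fun m => ∑ k ∈ Finset.range q, z k ^ m / (m.factorial : ℂ) with hgdef
  have hg : Summable g := summable_sum fun k _ => hs k
  have hS : (∑ k ∈ Finset.range q, ∏ l, Complex.exp ((r l : ℂ) *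
      Complex.exp (2 * (π : ℂ) * Complex.I * (k : ℂ) * (p l : ℂ) / (ql l : ℂ))))
      = ∑' m : ℕ, g m := by
    simp_rw [hprod, hexp]
    exact (Summable.tsum_finsetSum fun k _ => hs k).symm
  rw [hS, Complex.re_tsum hg]
  have hcore : ∀ m : ℕ, 0 ≤ (∑ k ∈ Finset.range q, z k ^ m).re := by
    intro m
    have expand : (∑ k ∈ Finset.range q, z k ^ m)
        = ∑ f : Fin m → Fin n, (∏ i, (r (f i) : ℂ)) *
            ∑ k ∈ Finset.range q, (∏ i, ω (f i)) ^ k := by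
      calc (∑ k ∈ Finset.range q, z k ^ m)
          = ∑ k ∈ Finset.range q, ∑ f : Fin m → Fin n,
              ∏ i, ((r (f i) : ℂ) * ω (f i) ^ k) := by
            refine Finset.sum_congr rfl fun k _ => ?_
            exact Fintype.sum_pow (fun l => (r l : ℂ) * ω l ^ k) m
        _ = ∑ f : Fin m → Fin n, ∑ k ∈ Finset.range q,
              ∏ i, ((r (f i) : ℂ) * ω (f i) ^ k) := Finset.sum_comm
        _ = ∑ f : Fin m → Fin n, (∏ i, (r (f i) : ℂ)) *
              ∑ k ∈ Finset.range q, (∏ i, ω (f i)) ^ k := by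
            refine Finset.sum_congr rfl fun f _ => ?_
            rw [Finset.mul_sum]
            refine Finset.sum_congr rfl fun k _ => ?_
            rw [Finset.prod_mul_distrib, ← Finset.prod_pow]
    rw [expand, Complex.re_sum]
    refine Finset.sum_nonneg fun f _ => ?_
    have hcast : (∏ i, (r (f i) : ℂ)) = ((∏ i, r (f i) : ℝ) : ℂ) := by push_cast; rfl
    rw [hcast, Complex.re_ofReal_mul]
    refine mul_nonneg (Finset.prod_nonneg fun i _ => hr (f i)) ?_
    set w : ℂ := ∏ i, ω (f i) with hwdef
    have hwq : w ^ q = 1 := by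
      rw [hwdef, ← Finset.prod_pow]
      simp [hωq]
    by_cases hw1 : w = 1
    · simp [hw1]
    · rw [geom_sum_eq hw1, hwq, sub_self, zero_div]
      simp
  have hgre : ∀ m : ℕ, 0 ≤ (g m).re := by
    intro m
    rw [hgdef]
    simp only
    rw [← Finset.sum_div]
    have : ((m.factorial : ℂ)) = ((m.factorial : ℝ) : ℂ) := by push_cast; rfl
    rw [this, Complex.div_ofReal_re]
    exact div_nonneg (hcore m) (by positivity)
  have hg0 : (g 0).re = q := by
    rw [hgdef]
    simp
  calc (q : ℝ) = (g 0).re := hg0.symm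
    _ ≤ ∑' m : ℕ, (g m).re :=
        Summable.le_tsum ((Complex.hasSum_re hg.hasSum).summable) 0 fun m _ => hgre m
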